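/- Let p_i/q_i be the convergents to ω_D and α_i = p_i - q_i ω_D', where ω_D' is the Galois conjugate of ω_D. Then α_i is totally positive if and only if i ≥ -1 is odd. -/

import Mathlib

open Real Filter

noncomputable def omg (D : ℕ) : ℝ := if D % 4 = 1 then (1 + Real.sqrt D) / 2 else Real.sqrt D

noncomputable def omgc (D : ℕ) : ℝ := if D % 4 = 1 then (1 - Real.sqrt D) / 2 else -Real.sqrt D

noncomputable def sigmaD (D : ℕ) : ℝ := omg D + (⌊-omgc D⌋ : ℤ)

noncomputable def gam (D : ℕ) : ℕ → ℝ
  | 0 => sigmaD D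
  | n + 1 => 1 / (gam D n - ⌊gam D n⌋)

/-- partial quotients of the continued fraction of σ_D -/
noncomputable def uD (D : ℕ) (n : ℕ) : ℤ := ⌊gam D n⌋

theorem stmt1 (D : ℕ)
    (hD2 : 2 ≤ D) (hsq : Squarefree D)
    (p q : ℤ → ℤ)
    (hpm1 : p (-1) = 1) (hqm1 : q (-1) = 0)
    (hp0 : p 0 = ⌈(uD D 0 : ℚ) / 2⌉) (hq0 : q 0 = 1)
    (hprec : ∀ i : ℤ, -1 ≤ i → p (i + 2) = uD D (i + 2).toNat * p (i + 1) + p i)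
    (hqrec : ∀ i : ℤ, -1 ≤ i → q (i + 2) = uD D (i + 2).toNat * q (i + 1) + q i)
 :
    ∀ i : ℤ, -1 ≤ i →
      ((0 < (p i : ℝ) - (q i : ℝ) * omgc D ∧ 0 < (p i : ℝ) - (q i : ℝ) * omg D) ↔ Odd i) := by
  have hDpos : (0:ℝ) < (D:ℝ) := by exact_mod_cast (by omega : 0 < D)
  have hs : Irrational (Real.sqrt D) := by
    rw [irrational_sqrt_natCast_iff]
    rintro ⟨r, hr⟩
    have h := hsq r (by rw [hr])
    rw [Nat.isUnit_iff] at h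
    subst h; omega
  have hspos : 0 < Real.sqrt D := Real.sqrt_pos.mpr hDpos
  have hω : Irrational (omg D) := by
    unfold omg; split_ifs
    · simpa using ((hs.natCast_add 1).div_natCast (by norm_num : (2:ℕ) ≠ 0))
    · exact hs
  have hgam0 : gam D 0 = sigmaD D := rfl
  have hgamS : ∀ n, gam D (n+1) = 1 / (gam D n - ⌊gam D n⌋) := fun n => rfl
  have huDdef : ∀ n, uD D n = ⌊gam D n⌋ := fun n => rfl
  have fr : ∀ x : ℝ, Irrational x → 0 < x - ⌊x⌋ ∧ x - ⌊x⌋ < 1 := by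
    intro x hx
    constructor
    · have h2 := Int.fract_pos.mpr (fun h => hx.ne_int ⌊x⌋ h)
      rwa [Int.fract] at h2
    · have h2 := Int.fract_lt_one x
      rwa [Int.fract] at h2
  have hγirr : ∀ n, Irrational (gam D n) := by
    intro n; induction n with
    | zero => rw [hgam0]; unfold sigmaD; exact hω.add_intCast _
    | succ n ih =>
        rw [hgamS, one_div]
        exact (ih.sub_intCast _).inv
  have hγgt1 : ∀ n, 1 < gam D (n+1) := by
    intro n
    rw [hgamS]
    exact one_lt_one_div (fr _ (hγirr n)).1 (fr _ (hγirr n)).2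
  have hγpos : ∀ n, 0 < gam D (n+1) := fun n => lt_trans one_pos (hγgt1 n)
  have hu1 : ∀ n, 1 ≤ uD D (n+1) := by
    intro n
    rw [huDdef]
    exact Int.le_floor.mpr (by exact_mod_cast (hγgt1 n).le)
  set a : ℤ := ⌊omg D⌋ with ha
  have hm : ⌊-omgc D⌋ = if D % 4 = 1 then a - 1 else a := by
    split_ifs with h
    · have h1 : -omgc D = omg D - ((1:ℤ):ℝ) := by
        unfold omgc omg; rw [if_pos h, if_pos h]; push_cast; ring
      rw [h1, Int.floor_sub_intCast]
    · have h1 : -omgc D = omg D := by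
        unfold omgc omg; rw [if_neg h, if_neg h]; ring
      rw [h1]
  have hu0 : uD D 0 = if D % 4 = 1 then 2*a - 1 else 2*a := by
    rw [huDdef, hgam0]
    unfold sigmaD
    rw [Int.floor_add_intCast, hm]
    split_ifs <;> ring
  have hp0' : p 0 = a := by
    rw [hp0, hu0]
    split_ifs
    · have h1 : (((2*a-1 : ℤ) : ℚ)) / 2 = (-1/2 : ℚ) + a := by push_cast; ring
      rw [h1, Int.ceil_add_intCast]; norm_num
    · have h1 : (((2*a : ℤ) : ℚ)) / 2 = (a : ℚ) := by push_cast; ring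
      rw [h1, Int.ceil_intCast]
  have hg1 : gam D 1 = 1/(omg D - (a:ℝ)) := by
    rw [hgamS, hgam0]
    unfold sigmaD
    rw [Int.floor_add_intCast]
    congr 1
    push_cast; ring
  have hfa0 : 0 < omg D - (a:ℝ) := (fr _ hω).1
  set F : ℤ → ℝ := fun i => (p i : ℝ) - (q i : ℝ) * omg D with hF
  have key : ∀ k : ℕ, gam D (k+1) = -F ((k:ℤ)-1) / F (k:ℤ) ∧ 0 < (-1:ℝ)^k * F ((k:ℤ)-1) := by
    intro k; induction k with
    | zero =>
      have e0 : ((0:ℕ):ℤ) = 0 := rfl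
      have e1 : ((0:ℕ):ℤ) - 1 = -1 := by norm_num
      rw [e1, e0]
      have hFm1 : F (-1) = 1 := by simp [hF, hpm1, hqm1]
      have hFz : F 0 = (a:ℝ) - omg D := by simp [hF, hp0', hq0]
      rw [hFm1, hFz, hg1]
      constructor
      · rw [eq_div_iff (by linarith : (a:ℝ) - omg D ≠ 0)]
        field_simp; ring
      · norm_num
    | succ k ih =>
      obtain ⟨ihγ, ihs⟩ := ih
      have hγp := hγpos k
      have hne : F (k:ℤ) ≠ 0 := by
        intro h0; rw [h0, div_zero] at ihγ; linarith
      have e1 : (k:ℤ) - 1 + 2 = (k:ℤ) + 1 := by ring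
      have e2 : (k:ℤ) - 1 + 1 = (k:ℤ) := by ring
      have e3 : ((k:ℤ) + 1).toNat = k + 1 := by omega
      have hp' := hprec ((k:ℤ)-1) (by omega)
      have hq' := hqrec ((k:ℤ)-1) (by omega)
      rw [e1, e2, e3] at hp' hq'
      have hrec : F ((k:ℤ)+1) = (uD D (k+1) : ℝ) * F (k:ℤ) + F ((k:ℤ)-1) := by
        simp only [hF, hp', hq']
        push_cast; ring
      have hF1 : F (k:ℤ) = -F ((k:ℤ)-1) / gam D (k+1) := by
        rw [eq_div_iff hne] at ihγ
        rw [eq_div_iff (ne_of_gt hγp)]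
        linarith [ihγ]
      have hsign : 0 < (-1:ℝ)^(k+1) * F (k:ℤ) := by
        have hc : (-1:ℝ)^(k+1) * F (k:ℤ) = ((-1:ℝ)^k * F ((k:ℤ)-1)) / gam D (k+1) := by
          rw [hF1]; ring
        rw [hc]
        exact div_pos ihs hγp
      have e4 : ((k+1:ℕ):ℤ) = (k:ℤ) + 1 := by push_cast; ring
      have e5 : ((k+1:ℕ):ℤ) - 1 = (k:ℤ) := by push_cast; ring
      rw [e5, e4]
      refine ⟨?_, hsign⟩
      have hγdef : gam D (k+1+1) = 1/(gam D (k+1) - (uD D (k+1):ℝ)) := by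
        rw [hgamS, huDdef]
      have h2 : gam D (k+1) - (uD D (k+1):ℝ) = -F ((k:ℤ)+1) / F (k:ℤ) := by
        rw [ihγ, hrec]
        field_simp
        ring
      rw [hγdef, h2, one_div_div, div_neg, neg_div]
  have hqnn : ∀ k : ℕ, 0 ≤ q ((k:ℤ)-1) ∧ 0 ≤ q (k:ℤ) := by
    intro k; induction k with
    | zero =>
      constructor
      · rw [show ((0:ℕ):ℤ)-1 = -1 by norm_num, hqm1]
      · rw [show ((0:ℕ):ℤ) = 0 from rfl, hq0]; norm_num
    | succ k ih =>
      have e4 : ((k+1:ℕ):ℤ) = (k:ℤ) + 1 := by push_cast; ring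
      have e5 : ((k+1:ℕ):ℤ) - 1 = (k:ℤ) := by push_cast; ring
      constructor
      · rw [e5]; exact ih.2
      · have e1 : (k:ℤ) - 1 + 2 = (k:ℤ) + 1 := by ring
        have e2 : (k:ℤ) - 1 + 1 = (k:ℤ) := by ring
        have e3 : ((k:ℤ) + 1).toNat = k + 1 := by omega
        have hq' := hqrec ((k:ℤ)-1) (by omega)
        rw [e1, e2, e3] at hq'
        rw [e4, hq']
        have hu := hu1 k
        have hmn := mul_nonneg (by linarith : (0:ℤ) ≤ uD D (k+1)) ih.2
        linarith [ih.1]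
  have hcc : omgc D < omg D := by
    unfold omg omgc; split_ifs <;> linarith
  intro i hi
  set k := (i+1).toNat with hkdef
  have hk : (k:ℤ) = i + 1 := Int.toNat_of_nonneg (by omega)
  have e6 : (k:ℤ) - 1 = i := by omega
  obtain ⟨-, hsg⟩ := key k
  rw [e6] at hsg
  constructor
  · rintro ⟨h1, h2⟩
    rw [Int.odd_iff]
    by_contra hodd
    have heven : i % 2 = 0 := by omega
    have hkodd : Odd k := by rw [Nat.odd_iff]; omega
    rw [Odd.neg_one_pow hkodd] at hsg
    simp only [hF] at hsg
    linarith
  · intro hodd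
    rw [Int.odd_iff] at hodd
    have hkeven : Even k := by rw [Nat.even_iff]; omega
    rw [Even.neg_one_pow hkeven, one_mul] at hsg
    simp only [hF] at hsg
    refine ⟨?_, hsg⟩
    have hqn : (0:ℝ) ≤ (q i : ℝ) := by
      have h := (hqnn k).1
      rw [e6] at h
      exact_mod_cast h
    have := mul_le_mul_of_nonneg_left hcc.le hqn
    linarith
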